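/- Elements of attainable measurements on qubit models have rank at most 1: Let ρ be a density matrix on ℂ² and λ a 2×2 Hermitian complex matrix with tr(ρλ) = 0 and ρλ + λρ ≠ 0 (i.e. the model genuinely depends on the parameter, since dρ/dθ = (1/2)(ρλ + λρ)). Let M be a positive semidefinite 2×2 complex matrix and ξ ∈ ℝ with M^{1/2} λ ρ^{1/2} = ξ M^{1/2} ρ^{1/2} (the condition for equality in the Braunstein–Caves inequality). Then M is not invertible; equivalently, M has rank at most 1. -/

import Mathlib

open scoped BigOperators ComplexOrder

noncomputable section

/-- The positive semidefinite square root of a positive semidefinite matrix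
(removed from Mathlib; restored with its former definition). -/
def Matrix.PosSemidef.sqrt {n : Type*} [Fintype n] [DecidableEq n] {𝕜 : Type*} [RCLike 𝕜]
    {A : Matrix n n 𝕜} (hA : A.PosSemidef) : Matrix n n 𝕜 :=
  hA.1.eigenvectorUnitary.1 * Matrix.diagonal ((↑) ∘ (√·) ∘ hA.1.eigenvalues) *
  (star hA.1.eigenvectorUnitary : Matrix n n 𝕜)

theorem Matrix.PosSemidef.sqrt_mul_self {n : Type*} [Fintype n] [DecidableEq n] {𝕜 : Type*} [RCLike 𝕜]
    {A : Matrix n n 𝕜} (hA : A.PosSemidef) : hA.sqrt * hA.sqrt = A := by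
  have hU : (star hA.1.eigenvectorUnitary : Matrix n n 𝕜) * hA.1.eigenvectorUnitary.1 = 1 :=
    Unitary.star_mul_self_of_mem hA.1.eigenvectorUnitary.2
  conv_rhs => rw [hA.1.spectral_theorem]
  simp only [Matrix.PosSemidef.sqrt, Unitary.conjStarAlgAut_apply]
  rw [show ∀ a b c d e f : Matrix n n 𝕜, a * b * c * (d * e * f) = a * b * (c * d) * e * f by
    intros; simp only [mul_assoc], hU, mul_one]
  congr 1
  rw [mul_assoc]
  congr 1
  rw [Matrix.diagonal_mul_diagonal]
  congr 1
  funext i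
  simp only [Function.comp_apply]
  rw [← RCLike.ofReal_mul, Real.mul_self_sqrt (hA.eigenvalues_nonneg i)]

/-- **Elements of attainable measurements on qubit models have rank at most 1.**
If the qubit model genuinely depends on the parameter (`ρλ + λρ ≠ 0`) and the POVM
element `M` satisfies the Braunstein–Caves equality condition, then `M` is singular. -/
theorem attainable_povm_rank_one
    (ρ : Matrix (Fin 2) (Fin 2) ℂ) (hρ : ρ.PosSemidef) (hρtr : ρ.trace = 1)
    (lam : Matrix (Fin 2) (Fin 2) ℂ) (hlam : lam.IsHermitian)
    (htr0 : (ρ * lam).trace = 0) (hdep : ρ * lam + lam * ρ ≠ 0)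
    (M : Matrix (Fin 2) (Fin 2) ℂ) (hM : M.PosSemidef) (ξ : ℝ)
    (heq : hM.sqrt * lam * hρ.sqrt = (ξ : ℂ) • (hM.sqrt * hρ.sqrt)) :
    ¬ IsUnit M := by
  intro hU
  -- sqrt of M is a unit
  have hMs : hM.sqrt * hM.sqrt = M := hM.sqrt_mul_self
  have hUs : IsUnit hM.sqrt := by
    rw [Matrix.isUnit_iff_isUnit_det] at hU ⊢
    rw [← hMs, Matrix.det_mul] at hU
    exact (isUnit_mul_self_iff.mp hU)
  -- cancel sqrt M on the left
  have h1 : lam * hρ.sqrt = (ξ : ℂ) • hρ.sqrt := by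
    have := heq
    rw [mul_assoc, ← mul_smul_comm] at this
    exact hUs.mul_left_cancel this
  -- multiply on the right by sqrt ρ
  have h2 : lam * ρ = (ξ : ℂ) • ρ := by
    have := congrArg (fun X => X * hρ.sqrt) h1
    simpa [mul_assoc, Matrix.smul_mul, hρ.sqrt_mul_self] using this
  have hρH : ρ.conjTranspose = ρ := hρ.1
  have h3 : ρ * lam = (ξ : ℂ) • ρ := by
    have := congrArg Matrix.conjTranspose h2
    simpa [Matrix.conjTranspose_mul, Matrix.conjTranspose_smul, hlam.eq, hρH,
      Complex.star_def, Complex.conj_ofReal] using this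
  have hξ : (ξ : ℂ) = 0 := by
    have := htr0
    rw [h3, Matrix.trace_smul, hρtr, smul_eq_mul, mul_one] at this
    exact this
  apply hdep
  rw [h3, h2, hξ, zero_smul, add_zero]
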